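/- arXiv:2111.14098 — 2 statements merged into one kernel-verified Lean document; each statement's English description precedes it below -/
import Mathlib

section
/- Let 1 ≤ j ≤ p be integers, let Ā_1,…,Ā_p be continuous multilinear maps on ℝ^n (Ā_i being i-multilinear) with ‖Ā_i‖ ≤ L̄ for all i, where L̄ > 0, and let σ > 0, α > 0. Suppose δ satisfies 0 < δ ≤ min(1, α / (4 max(L̄, σ))) and d ∈ ℝ^n satisfies ‖d‖ ≤ δ and ΔT̄_j(d) ≥ α δ^j / j!. Then the regularized model decrement satisfies Δm̄(d) ≥ (1/2) α δ^j / j!. -/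
/-- The inexact Taylor decrement of degree `j` built from the
`i`-multilinear maps `A i` (the inexact `i`-th derivatives), evaluated at `d`:
`ΔT̄_j(d) = −∑_{i=1}^j Ā_i[d]^i / i!`. -/
noncomputable def taylorDecrement (n j : ℕ)
    (A : ∀ i : ℕ, ContinuousMultilinearMap ℝ
      (fun _ : Fin i => EuclideanSpace ℝ (Fin n)) ℝ)
    (d : EuclideanSpace ℝ (Fin n)) : ℝ :=
  -∑ i ∈ Finset.Icc 1 j, (A i fun _ => d) / (i.factorial : ℝ)

/-- The regularized model decrement
`Δm̄(d) = ΔT̄_p(d) − (σ / (p+1)!) ‖d‖^{p+1}`. -/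
noncomputable def modelDecrement (n p : ℕ)
    (A : ∀ i : ℕ, ContinuousMultilinearMap ℝ
      (fun _ : Fin i => EuclideanSpace ℝ (Fin n)) ℝ)
    (σ : ℝ) (d : EuclideanSpace ℝ (Fin n)) : ℝ :=
  taylorDecrement n p A d - σ / ((p + 1).factorial : ℝ) * ‖d‖ ^ (p + 1)

lemma sum_inv_factorial_le (j : ℕ) (hj : 1 ≤ j) :
    ∀ q, j ≤ q →
      ∑ i ∈ Finset.Ioc j q, (1 : ℝ) / (i.factorial : ℝ)
        ≤ 1 / (j.factorial : ℝ) - 1 / (q.factorial : ℝ) := by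
  intro q hq
  induction q, hq using Nat.le_induction with
  | base => simp
  | succ q hq ih =>
    rw [Finset.sum_Ioc_succ_top (by omega)]
    have hq0 : (0:ℝ) < (q.factorial : ℝ) := by positivity
    have hq1 : (0:ℝ) < ((q+1).factorial : ℝ) := by positivity
    have hfac : ((q+1).factorial : ℝ) = (q+1) * (q.factorial : ℝ) := by
      rw [Nat.factorial_succ]; push_cast; ring
    have h2 : (1:ℝ)/((q+1).factorial : ℝ) + 1/((q+1).factorial : ℝ) ≤ 1/(q.factorial:ℝ) := by
      rw [← add_div, div_le_div_iff₀ hq1 hq0, hfac]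
      have : (1:ℝ) ≤ q := by exact_mod_cast le_trans hj hq
      nlinarith
    linarith

/-- If `δ ≤ min(1, α/(4 max(L̄,σ)))`, `‖d‖ ≤ δ` and
`ΔT̄_j(d) ≥ α δ^j / j!`, then `Δm̄(d) ≥ (1/2) α δ^j / j!`. -/
theorem model_decrement_lower_bound (n p j : ℕ) (hj : 1 ≤ j) (hjp : j ≤ p)
    (Abar : ∀ i : ℕ, ContinuousMultilinearMap ℝ
      (fun _ : Fin i => EuclideanSpace ℝ (Fin n)) ℝ)
    (Lbar : ℝ) (hLbar : 0 < Lbar)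
    (hbd : ∀ i ∈ Finset.Icc 1 p, ‖Abar i‖ ≤ Lbar)
    (σ α : ℝ) (hσ : 0 < σ) (hα : 0 < α)
    (δ : ℝ) (hδ0 : 0 < δ) (hδ : δ ≤ min 1 (α / (4 * max Lbar σ)))
    (d : EuclideanSpace ℝ (Fin n)) (hd : ‖d‖ ≤ δ)
    (hDT : α * δ ^ j / (j.factorial : ℝ) ≤ taylorDecrement n j Abar d) :
    (1 / 2) * α * δ ^ j / (j.factorial : ℝ) ≤ modelDecrement n p Abar σ d := by
  set M : ℝ := max Lbar σ with hMdef
  have hM : 0 < M := lt_of_lt_of_le hLbar (le_max_left _ _)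
  have hδ1 : δ ≤ 1 := le_trans hδ (min_le_left _ _)
  have hδ2 : δ ≤ α / (4 * M) := le_trans hδ (min_le_right _ _)
  have hMδ : M * δ ≤ α / 4 := by
    have h := (le_div_iff₀ (by positivity : (0:ℝ) < 4 * M)).mp hδ2
    nlinarith
  have hd0 : (0:ℝ) ≤ ‖d‖ := norm_nonneg d
  have hF : (0:ℝ) < (j.factorial : ℝ) := by positivity
  -- per-term bound on Ioc j p
  have hterm : ∀ i ∈ Finset.Ioc j p, |Abar i fun _ => d| ≤ M * δ ^ (j+1) := by
    intro i hi
    rw [Finset.mem_Ioc] at hi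
    have h1 : ‖Abar i fun _ => d‖ ≤ ‖Abar i‖ * ∏ _k : Fin i, ‖d‖ :=
      (Abar i).le_opNorm _
    have h2 : (∏ _k : Fin i, ‖d‖) = ‖d‖ ^ i := by
      simp [Finset.prod_const, Finset.card_univ]
    have h3 : ‖d‖ ^ i ≤ δ ^ i := pow_le_pow_left₀ hd0 hd i
    have h4 : δ ^ i ≤ δ ^ (j+1) :=
      pow_le_pow_of_le_one (le_of_lt hδ0) hδ1 (by omega)
    have h5 : ‖Abar i‖ ≤ Lbar := hbd i (Finset.mem_Icc.mpr ⟨by omega, hi.2⟩)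
    have h6 : Lbar ≤ M := le_max_left _ _
    calc |Abar i fun _ => d| = ‖Abar i fun _ => d‖ := rfl
      _ ≤ ‖Abar i‖ * ‖d‖ ^ i := by rw [← h2]; exact h1
      _ ≤ M * δ ^ (j+1) := by
          have h0 : (0:ℝ) ≤ ‖Abar i‖ := norm_nonneg _
          nlinarith [pow_nonneg hd0 i, pow_nonneg (le_of_lt hδ0) i]
  -- split the sum
  have hsplit : taylorDecrement n p Abar d
      = taylorDecrement n j Abar d
        - ∑ i ∈ Finset.Ioc j p, (Abar i fun _ => d) / (i.factorial : ℝ) := by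
    unfold taylorDecrement
    rw [show Finset.Icc 1 p = Finset.Ioc 0 p from rfl,
        show Finset.Icc 1 j = Finset.Ioc 0 j from rfl,
        ← Finset.sum_Ioc_consecutive _ (Nat.zero_le j) hjp]
    ring
  -- bound the tail sum
  have htail : ∑ i ∈ Finset.Ioc j p, (Abar i fun _ => d) / (i.factorial : ℝ)
      ≤ ∑ i ∈ Finset.Ioc j p, M * δ ^ (j+1) / (i.factorial : ℝ) := by
    apply Finset.sum_le_sum
    intro i hi
    have h := le_trans (le_abs_self _) (hterm i hi)
    exact div_le_div_of_nonneg_right h (by positivity)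
  have hsum : ∑ i ∈ Finset.Ioc j p, M * δ ^ (j+1) / (i.factorial : ℝ)
        + M * δ ^ (j+1) / ((p+1).factorial : ℝ)
      ≤ M * δ ^ (j+1) / (j.factorial : ℝ) := by
    have h1 : ∑ i ∈ Finset.Ioc j (p+1), (1:ℝ)/(i.factorial : ℝ)
        ≤ 1/(j.factorial : ℝ) - 1/((p+1).factorial : ℝ) :=
      sum_inv_factorial_le j hj (p+1) (by omega)
    have h2 : ∑ i ∈ Finset.Ioc j (p+1), (1:ℝ)/(i.factorial : ℝ)
        = ∑ i ∈ Finset.Ioc j p, (1:ℝ)/(i.factorial : ℝ) + 1/((p+1).factorial:ℝ) :=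
      Finset.sum_Ioc_succ_top hjp _
    have h3 : ∑ i ∈ Finset.Ioc j p, M * δ ^ (j+1) / (i.factorial : ℝ)
        = M * δ ^ (j+1) * ∑ i ∈ Finset.Ioc j p, (1:ℝ)/(i.factorial : ℝ) := by
      rw [Finset.mul_sum]; apply Finset.sum_congr rfl; intro i _; ring
    have hMd : (0:ℝ) ≤ M * δ ^ (j+1) := by positivity
    have hp1 : (0:ℝ) < ((p+1).factorial : ℝ) := by positivity
    rw [h3]
    have hkey := mul_le_mul_of_nonneg_left (h2 ▸ h1) hMd
    rw [mul_add, mul_sub] at hkey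
    have e1 : M * δ ^ (j+1) / ((p+1).factorial : ℝ)
        = M * δ ^ (j+1) * (1/((p+1).factorial:ℝ)) := by ring
    have e2 : M * δ ^ (j+1) / (j.factorial : ℝ)
        = M * δ ^ (j+1) * (1/(j.factorial:ℝ)) := by ring
    rw [e1, e2]
    linarith [mul_nonneg hMd (by positivity : (0:ℝ) ≤ 1/(((p+1).factorial : ℕ) : ℝ))]
  -- bound the regularization term
  have hreg : σ / ((p+1).factorial : ℝ) * ‖d‖ ^ (p+1)
      ≤ M * δ ^ (j+1) / ((p+1).factorial : ℝ) := by
    have h3 : ‖d‖ ^ (p+1) ≤ δ ^ (p+1) := pow_le_pow_left₀ hd0 hd _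
    have h4 : δ ^ (p+1) ≤ δ ^ (j+1) :=
      pow_le_pow_of_le_one (le_of_lt hδ0) hδ1 (by omega)
    have h6 : σ ≤ M := le_max_right _ _
    have hp1 : (0:ℝ) < ((p+1).factorial : ℝ) := by positivity
    have key : σ * ‖d‖ ^ (p+1) ≤ M * δ ^ (j+1) :=
      mul_le_mul h6 (h3.trans h4) (pow_nonneg hd0 _) hM.le
    rw [div_mul_eq_mul_div]
    exact div_le_div_of_nonneg_right key hp1.le
  -- combine
  have hMδj : M * δ ^ (j+1) / (j.factorial : ℝ) ≤ (α/4) * δ ^ j / (j.factorial : ℝ) := by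
    apply div_le_div_of_nonneg_right ?_ hF.le
    have he : M * δ ^ (j+1) = (M * δ) * δ ^ j := by ring
    rw [he]
    have hpj : (0:ℝ) ≤ δ ^ j := by positivity
    nlinarith
  have hmodel : modelDecrement n p Abar σ d
      = taylorDecrement n j Abar d
        - (∑ i ∈ Finset.Ioc j p, (Abar i fun _ => d) / (i.factorial : ℝ)
           + σ / ((p+1).factorial : ℝ) * ‖d‖ ^ (p+1)) := by
    unfold modelDecrement
    rw [hsplit]; ring
  rw [hmodel]
  have : (1/2) * α * δ ^ j / (j.factorial:ℝ) + (α/4) * δ ^ j / (j.factorial:ℝ)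
      ≤ α * δ ^ j / (j.factorial:ℝ) := by
    rw [← add_div]
    apply div_le_div_of_nonneg_right ?_ hF.le
    have hpj : (0:ℝ) ≤ δ ^ j := by positivity
    nlinarith
  linarith
end

section
/- Let 1 ≤ j ≤ p be integers, let Ā_1,…,Ā_p be continuous multilinear maps on ℝ^n (Ā_i being i-multilinear) with ‖Ā_i‖ ≤ L̄ for all i, where L̄ > 0, let σ > 0, ς ∈ (0,1], ω ∈ (0,1), and ε ∈ (0,1]. Suppose δ satisfies 0 < δ ≤ ς ε / (4 (1+ω) max(L̄, σ)) and d ∈ ℝ^n satisfies ‖d‖ ≤ δ and ΔT̄_j(d) > (ς ε / (1+ω)) · δ^j / j!. Then the regularized model decrement satisfies Δm̄(d) ≥ (ς ε / (2(1+ω))) · δ^j / j!. -/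
/-- If `δ ≥ j+1 ≥ i+1`, the terms `δ^i/i!` are monotone up to `j`. -/
lemma pow_div_factorial_le_of_le (δ : ℝ) (h0 : 0 ≤ δ) {i j : ℕ} (hij : i ≤ j) :
    (j : ℝ) + 1 ≤ δ → δ ^ i / (i.factorial : ℝ) ≤ δ ^ j / (j.factorial : ℝ) := by
  induction j, hij using Nat.le_induction with
  | base => intro _; exact le_refl _
  | succ m hm ih =>
    intro h
    have h' : (m : ℝ) + 1 ≤ δ := by push_cast at h ⊢; linarith
    refine le_trans (ih h') ?_
    have hf : (0:ℝ) < (m.factorial : ℝ) := by positivity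
    have hpow : (0:ℝ) ≤ δ ^ m := pow_nonneg h0 m
    rw [pow_succ, Nat.factorial_succ]
    push_cast
    rw [div_le_div_iff₀ hf (by positivity)]
    push_cast at h
    nlinarith [mul_le_mul_of_nonneg_left h hpow]

/-- Geometric-type bound for the tail sum `∑_{i=j+1}^q δ^i/i!` when `δ ≤ j+1`. -/
lemma tail_sum_bound (δ : ℝ) (h0 : 0 ≤ δ) (j : ℕ) (hδ : δ ≤ (j : ℝ) + 1) :
    ∀ q, j ≤ q →
      ∑ i ∈ Finset.Icc (j+1) q, δ ^ i / (i.factorial : ℝ)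
        + ((j : ℝ) + 2) * (δ ^ (q+1) / ((q+1).factorial : ℝ))
      ≤ ((j : ℝ) + 2) * (δ ^ (j+1) / ((j+1).factorial : ℝ)) := by
  intro q hq
  induction q, hq using Nat.le_induction with
  | base =>
    rw [Finset.Icc_eq_empty (by omega)]
    simp
  | succ q hq ih =>
    rw [Finset.sum_Icc_succ_top (by omega : j + 1 ≤ q + 1)]
    have key : ((j : ℝ) + 2) * (δ ^ (q+1+1) / ((q+1+1).factorial : ℝ))
        ≤ ((j : ℝ) + 1) * (δ ^ (q+1) / ((q+1).factorial : ℝ)) := by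
      have hf : (0:ℝ) < ((q+1).factorial : ℝ) := by positivity
      have hpow : (0:ℝ) ≤ δ ^ (q+1) := pow_nonneg h0 _
      have hqj : (j : ℝ) ≤ (q : ℝ) := by exact_mod_cast hq
      have hscal : ((j:ℝ) + 2) * δ ≤ ((j:ℝ) + 1) * ((q:ℝ) + 1 + 1) := by nlinarith
      rw [Nat.factorial_succ (q+1), pow_succ]
      push_cast
      rw [← mul_div_assoc, ← mul_div_assoc,
        div_le_div_iff₀ (by positivity) hf]
      nlinarith [mul_le_mul_of_nonneg_right hscal (mul_nonneg hpow hf.le)]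
    have := ih
    linarith

set_option maxHeartbeats 1000000 in
/-- If `δ ≤ ς ε / (4 (1+ω) max(L̄,σ))`, `‖d‖ ≤ δ` and
`ΔT̄_j(d) > (ς ε / (1+ω)) δ^j / j!`, then
`Δm̄(d) ≥ (ς ε / (2(1+ω))) δ^j / j!`. -/
theorem model_decrement_lower_bound_step1 (n p j : ℕ) (hj : 1 ≤ j) (hjp : j ≤ p)
    (Abar : ∀ i : ℕ, ContinuousMultilinearMap ℝ
      (fun _ : Fin i => EuclideanSpace ℝ (Fin n)) ℝ)
    (Lbar : ℝ) (hLbar : 0 < Lbar)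
    (hbd : ∀ i ∈ Finset.Icc 1 p, ‖Abar i‖ ≤ Lbar)
    (σ ς ω ε : ℝ) (hσ : 0 < σ) (hς0 : 0 < ς) (hς1 : ς ≤ 1)
    (hω0 : 0 < ω) (hω1 : ω < 1) (hε0 : 0 < ε) (hε1 : ε ≤ 1)
    (δ : ℝ) (hδ0 : 0 < δ) (hδ : δ ≤ ς * ε / (4 * (1 + ω) * max Lbar σ))
    (d : EuclideanSpace ℝ (Fin n)) (hd : ‖d‖ ≤ δ)
    (hDT : ς * ε / (1 + ω) * δ ^ j / (j.factorial : ℝ) <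
      taylorDecrement n j Abar d) :
    ς * ε / (2 * (1 + ω)) * δ ^ j / (j.factorial : ℝ) ≤
      modelDecrement n p Abar σ d := by
  set M : ℝ := max Lbar σ with hMdef
  have hM : 0 < M := lt_of_lt_of_le hLbar (le_max_left _ _)
  have hω : (0:ℝ) < 1 + ω := by linarith
  have hd0 : (0:ℝ) ≤ ‖d‖ := norm_nonneg d
  have hδnn : (0:ℝ) ≤ δ := le_of_lt hδ0
  -- rearranged form of hδ
  have hc4 : 4 * M * δ ≤ ς * ε / (1 + ω) := by
    have hpos : (0:ℝ) < 4 * (1 + ω) * M := by positivity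
    have h1 : δ * (4 * (1 + ω) * M) ≤ ς * ε := (le_div_iff₀ hpos).mp hδ
    rw [le_div_iff₀ hω]
    nlinarith
  -- pointwise bound on the multilinear terms
  have habs : ∀ i ∈ Finset.Icc 1 p, |(Abar i) fun _ => d| ≤ M * δ ^ i := by
    intro i hi
    have h1 : ‖(Abar i) fun _ => d‖ ≤ ‖Abar i‖ * ∏ _k : Fin i, ‖d‖ :=
      (Abar i).le_opNorm _
    rw [Finset.prod_const, Finset.card_univ, Fintype.card_fin] at h1
    rw [← Real.norm_eq_abs]
    refine h1.trans ?_
    have h2 : ‖d‖ ^ i ≤ δ ^ i := pow_le_pow_left₀ hd0 hd i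
    have h3 : ‖Abar i‖ ≤ M := (hbd i hi).trans (le_max_left _ _)
    exact mul_le_mul h3 h2 (by positivity) (le_of_lt hM)
  have habs' : ∀ i ∈ Finset.Icc 1 p,
      -(M * δ ^ i) ≤ (Abar i) fun _ => d := fun i hi => neg_le_of_abs_le (habs i hi)
  have habs'' : ∀ i ∈ Finset.Icc 1 p,
      ((Abar i) fun _ => d) ≤ M * δ ^ i := fun i hi => le_of_abs_le (habs i hi)
  have hjfac : (0:ℝ) < (j.factorial : ℝ) := by positivity
  have hTj : (0:ℝ) < δ ^ j / (j.factorial : ℝ) := by positivity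
  -- δ < j + 1 (otherwise hDT is contradictory)
  have hδj : δ < (j : ℝ) + 1 := by
    by_contra hcase
    push_neg at hcase
    have hub : taylorDecrement n j Abar d
        ≤ (j : ℝ) * (M * (δ ^ j / (j.factorial : ℝ))) := by
      unfold taylorDecrement
      rw [← Finset.sum_neg_distrib]
      have h2 : ∀ i ∈ Finset.Icc 1 j,
          -(((Abar i) fun _ => d) / (i.factorial : ℝ))
            ≤ M * (δ ^ j / (j.factorial : ℝ)) := by
        intro i hi
        have hi' : i ∈ Finset.Icc 1 p := by
          simp only [Finset.mem_Icc] at hi ⊢; omega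
        have hij : i ≤ j := (Finset.mem_Icc.mp hi).2
        have hifac : (0:ℝ) < (i.factorial : ℝ) := by positivity
        have h3 : -(((Abar i) fun _ => d) / (i.factorial : ℝ))
            ≤ M * δ ^ i / (i.factorial : ℝ) := by
          rw [← neg_div]
          exact (div_le_div_iff_of_pos_right hifac).mpr
            (by have := habs' i hi'; linarith)
        refine h3.trans ?_
        rw [mul_div_assoc]
        exact mul_le_mul_of_nonneg_left
          (pow_div_factorial_le_of_le δ hδnn hij hcase) hM.le
      calc ∑ i ∈ Finset.Icc 1 j, -(((Abar i) fun _ => d) / (i.factorial : ℝ))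
          ≤ ∑ _i ∈ Finset.Icc 1 j, M * (δ ^ j / (j.factorial : ℝ)) :=
            Finset.sum_le_sum h2
        _ = (j : ℝ) * (M * (δ ^ j / (j.factorial : ℝ))) := by
            rw [Finset.sum_const, Nat.card_Icc]
            simp [nsmul_eq_mul]
    -- combine with hDT for a contradiction
    have hj1 : 4 * M * ((j:ℝ) + 1) ≤ ς * ε / (1 + ω) := by
      nlinarith
    have hDT' : (ς * ε / (1 + ω)) * (δ ^ j / (j.factorial : ℝ))
        < taylorDecrement n j Abar d := by
      rw [← mul_div_assoc]; exact hDT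
    have hjnn : (0:ℝ) ≤ (j:ℝ) := Nat.cast_nonneg j
    have h6 := mul_le_mul_of_nonneg_right hj1 hTj.le
    have h7 := lt_of_lt_of_le hDT' hub
    nlinarith [mul_pos hM hTj, mul_nonneg (mul_pos hM hTj).le hjnn]
  -- tail sum bound
  have htail : ∑ i ∈ Finset.Icc (j+1) (p+1), δ ^ i / (i.factorial : ℝ)
      ≤ 2 * δ * (δ ^ j / (j.factorial : ℝ)) := by
    have h1 := tail_sum_bound δ hδnn j hδj.le (p+1) (by omega)
    have h2 : (0:ℝ) ≤ ((j:ℝ) + 2) * (δ ^ (p+1+1) / ((p+1+1).factorial : ℝ)) := by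
      positivity
    have hj1 : ((0:ℝ) < (j:ℝ) + 1) := by positivity
    have h3 : ((j:ℝ) + 2) * (δ ^ (j+1) / ((j+1).factorial : ℝ))
        ≤ 2 * δ * (δ ^ j / (j.factorial : ℝ)) := by
      have h4 : ((j:ℝ) + 2) ≤ 2 * ((j:ℝ) + 1) := by
        have : (0:ℝ) ≤ (j:ℝ) := Nat.cast_nonneg j
        linarith
      calc ((j:ℝ) + 2) * (δ ^ (j+1) / ((j+1).factorial : ℝ))
          ≤ 2 * ((j:ℝ) + 1) * (δ ^ (j+1) / ((j+1).factorial : ℝ)) := by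
            exact mul_le_mul_of_nonneg_right h4 (by positivity)
        _ = 2 * δ * (δ ^ j / (j.factorial : ℝ)) := by
            rw [pow_succ, Nat.factorial_succ]
            push_cast
            field_simp
    linarith
  -- split the Taylor sum
  have hsplit : taylorDecrement n p Abar d = taylorDecrement n j Abar d
      - ∑ i ∈ Finset.Icc (j+1) p, ((Abar i) fun _ => d) / (i.factorial : ℝ) := by
    unfold taylorDecrement
    have e1 : Finset.Icc 1 p = Finset.Icc 1 j ∪ Finset.Icc (j+1) p := by
      ext x
      simp only [Finset.mem_Icc, Finset.mem_union]
      omega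
    have e2 : Disjoint (Finset.Icc 1 j) (Finset.Icc (j+1) p) := by
      rw [Finset.disjoint_left]
      intro a ha hb
      simp only [Finset.mem_Icc] at ha hb
      omega
    rw [e1, Finset.sum_union e2]
    ring
  -- bound the error terms
  have hmid : ∑ i ∈ Finset.Icc (j+1) p, ((Abar i) fun _ => d) / (i.factorial : ℝ)
      + σ / ((p + 1).factorial : ℝ) * ‖d‖ ^ (p + 1)
      ≤ M * ∑ i ∈ Finset.Icc (j+1) (p+1), δ ^ i / (i.factorial : ℝ) := by
    have hA : ∑ i ∈ Finset.Icc (j+1) p, ((Abar i) fun _ => d) / (i.factorial : ℝ)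
        ≤ ∑ i ∈ Finset.Icc (j+1) p, M * (δ ^ i / (i.factorial : ℝ)) := by
      refine Finset.sum_le_sum fun i hi => ?_
      have hi' : i ∈ Finset.Icc 1 p := by
        simp only [Finset.mem_Icc] at hi ⊢; omega
      have hifac : (0:ℝ) < (i.factorial : ℝ) := by positivity
      rw [← mul_div_assoc]
      exact (div_le_div_iff_of_pos_right hifac).mpr (habs'' i hi')
    have hσ' : σ / ((p + 1).factorial : ℝ) * ‖d‖ ^ (p + 1)
        ≤ M * (δ ^ (p+1) / ((p+1).factorial : ℝ)) := by
      have h5 : ‖d‖ ^ (p+1) ≤ δ ^ (p+1) := pow_le_pow_left₀ hd0 hd _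
      have hσM : σ ≤ M := le_max_right _ _
      have hfp : (0:ℝ) < ((p+1).factorial : ℝ) := by positivity
      calc σ / ((p + 1).factorial : ℝ) * ‖d‖ ^ (p + 1)
          ≤ M / ((p + 1).factorial : ℝ) * δ ^ (p + 1) := by
            gcongr
        _ = M * (δ ^ (p+1) / ((p+1).factorial : ℝ)) := by ring
    rw [Finset.sum_Icc_succ_top (show j + 1 ≤ p + 1 by omega), mul_add,
      Finset.mul_sum]
    exact add_le_add hA hσ'
  -- assemble
  unfold modelDecrement
  rw [hsplit]
  have hM2 : M * ∑ i ∈ Finset.Icc (j+1) (p+1), δ ^ i / (i.factorial : ℝ)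
      ≤ M * (2 * δ * (δ ^ j / (j.factorial : ℝ))) :=
    mul_le_mul_of_nonneg_left htail hM.le
  have hc2 : ς * ε / (2 * (1 + ω)) = ς * ε / (1 + ω) / 2 := by
    rw [div_div, mul_comm (1 + ω) 2]
  have hfinal : M * (2 * δ * (δ ^ j / (j.factorial : ℝ)))
      ≤ ς * ε / (2 * (1 + ω)) * δ ^ j / (j.factorial : ℝ) := by
    rw [hc2, mul_div_assoc]
    nlinarith [mul_le_mul_of_nonneg_right hc4 hTj.le]
  have hDT2 : (ς * ε / (1 + ω)) * (δ ^ j / (j.factorial : ℝ))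
      < taylorDecrement n j Abar d := by
    rw [← mul_div_assoc]; exact hDT
  rw [hc2, mul_div_assoc]
  have hgoal : ς * ε / (1 + ω) / 2 * (δ ^ j / (j.factorial : ℝ))
      = (ς * ε / (1 + ω)) * (δ ^ j / (j.factorial : ℝ))
        - ς * ε / (1 + ω) / 2 * (δ ^ j / (j.factorial : ℝ)) := by ring
  rw [hgoal]
  have hfinal' : M * (2 * δ * (δ ^ j / (j.factorial : ℝ)))
      ≤ ς * ε / (1 + ω) / 2 * (δ ^ j / (j.factorial : ℝ)) := by
    nlinarith [mul_le_mul_of_nonneg_right hc4 hTj.le]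
  linarith [hDT2, hmid, hM2]
end
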